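/- Let f be a multivariate polynomial with real coefficients in N variables. Then f is SOS-convex (i.e., its Hessian matrix of second partial derivatives, viewed as an N×N matrix with polynomial entries, factors as ∇²f = L·Lᵀ for some N×a matrix L with polynomial entries) if and only if the polynomial (x, z) ↦ zᵀ ∇²f(x) z, viewed as a polynomial in the 2N variables (x₁,…,x_N, z₁,…,z_N), is a sum of squares of polynomials. -/

import Mathlib

open MvPolynomial

/-- A polynomial `p` is a sum of squares if `p = ∑ qᵢ²` for finitely many polynomials `qᵢ`. -/
def IsSumOfSquares {σ : Type*} (p : MvPolynomial σ ℝ) : Prop :=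
  ∃ (m : ℕ) (q : Fin m → MvPolynomial σ ℝ), p = ∑ k, (q k) ^ 2



lemma pderiv_comm' {σ : Type*} [DecidableEq σ] {R : Type*} [CommRing R] (i j : σ)
    (p : MvPolynomial σ R) : pderiv i (pderiv j p) = pderiv j (pderiv i p) := by
  induction p using MvPolynomial.induction_on' with
  | monomial s a =>
    simp only [pderiv_monomial]
    rcases eq_or_ne i j with rfl|h
    · ring_nf
    · have h1 : s - Finsupp.single j 1 - Finsupp.single i 1
          = s - Finsupp.single i 1 - Finsupp.single j 1 := tsub_right_comm
      have h2 : ((s - Finsupp.single j 1 : σ →₀ ℕ)) i = s i := by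
        simp [Finsupp.tsub_apply, Finsupp.single_apply, Ne.symm h]
      have h3 : ((s - Finsupp.single i 1 : σ →₀ ℕ)) j = s j := by
        simp [Finsupp.tsub_apply, Finsupp.single_apply, h]
      rw [h1, h2, h3]
      ring_nf
  | add p q hp hq => simp [hp, hq]

lemma sum_sq_eq_zero {σ : Type*} {m : ℕ} (q : Fin m → MvPolynomial σ ℝ)
    (h : ∑ k, (q k) ^ 2 = 0) (k : Fin m) : q k = 0 := by
  apply MvPolynomial.funext
  intro x
  have hx : ∑ j, (eval x (q j)) ^ 2 = 0 := by
    have := congrArg (eval x) h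
    simpa using this
  have := (Finset.sum_eq_zero_iff_of_nonneg (fun j _ => sq_nonneg (eval x (q j)))).mp hx k
    (Finset.mem_univ k)
  simpa [pow_eq_zero_iff] using this

noncomputable def phi (N : ℕ) : MvPolynomial (Fin N ⊕ Fin N) ℝ →ₐ[ℝ] MvPolynomial (Fin N) ℝ :=
  aeval (Sum.elim X (fun _ => 0))

lemma phi_rename {N : ℕ} (p : MvPolynomial (Fin N) ℝ) : phi N (rename Sum.inl p) = p := by
  rw [phi, aeval_rename]
  simp only [Function.comp_def, Sum.elim_inl]
  exact aeval_X_left_apply p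

lemma phi_X_inr {N : ℕ} (i : Fin N) : phi N (X (Sum.inr i)) = 0 := by simp [phi]

lemma pderiv_inr_rename {N : ℕ} (i : Fin N) (p : MvPolynomial (Fin N) ℝ) :
    pderiv (Sum.inr i) (rename Sum.inl p) = 0 := by
  induction p using MvPolynomial.induction_on with
  | C a => simp
  | add p q hp hq => simp [hp, hq]
  | mul_X p j hp => simp [hp, pderiv_mul, pderiv_X_of_ne (show (Sum.inl j : Fin N ⊕ Fin N) ≠ Sum.inr i by simp)]

set_option maxRecDepth 4000 in
lemma key_lhs {N : ℕ} (f : MvPolynomial (Fin N) ℝ) (i0 j0 : Fin N) :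
    phi N (pderiv (Sum.inr i0) (pderiv (Sum.inr j0)
      (∑ i : Fin N, ∑ j : Fin N,
        X (Sum.inr i) * rename Sum.inl (pderiv i (pderiv j f)) * X (Sum.inr j) :
        MvPolynomial (Fin N ⊕ Fin N) ℝ)))
    = pderiv j0 (pderiv i0 f) + pderiv i0 (pderiv j0 f) := by
  simp only [map_sum, pderiv_mul, pderiv_inr_rename, pderiv_X, map_add, map_mul, phi_rename,
    phi_X_inr, mul_zero, zero_mul, add_zero, zero_add, map_zero]
  simp only [Pi.single_apply, Sum.inr.injEq, apply_ite (phi N), map_one, map_zero, ite_mul,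
    mul_ite, one_mul, mul_one, zero_mul, mul_zero, Finset.sum_add_distrib, Finset.sum_ite_eq,
    Finset.sum_ite_eq', Finset.mem_univ, if_true]


lemma key_rhs {N : ℕ} (i0 j0 : Fin N) (p : MvPolynomial (Fin N ⊕ Fin N) ℝ)
    (hp : phi N p = 0) :
    phi N (pderiv (Sum.inr i0) (pderiv (Sum.inr j0) (p ^ 2)))
      = 2 * phi N (pderiv (Sum.inr i0) p) * phi N (pderiv (Sum.inr j0) p) := by
  simp only [sq, pderiv_mul, map_add, map_mul, hp, mul_zero, zero_mul, add_zero, zero_add]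
  ring

lemma backward_dir (N : ℕ) (f : MvPolynomial (Fin N) ℝ) (m : ℕ)
    (q : Fin m → MvPolynomial (Fin N ⊕ Fin N) ℝ)
    (hq : (∑ i : Fin N, ∑ j : Fin N,
        X (Sum.inr i) * rename Sum.inl (pderiv i (pderiv j f)) * X (Sum.inr j) :
        MvPolynomial (Fin N ⊕ Fin N) ℝ) = ∑ k, (q k) ^ 2) :
    ∃ (a : ℕ) (L : Matrix (Fin N) (Fin a) (MvPolynomial (Fin N) ℝ)),
        Matrix.of (fun i j : Fin N => pderiv i (pderiv j f)) = L * L.transpose := by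
  have hq0 : ∀ k, phi N (q k) = 0 := by
    have hP : phi N (∑ i : Fin N, ∑ j : Fin N,
        X (Sum.inr i) * rename Sum.inl (pderiv i (pderiv j f)) * X (Sum.inr j)) = 0 := by
      simp [map_sum, map_mul, phi_X_inr]
    have h0 : ∑ k, (phi N (q k)) ^ 2 = 0 := by
      rw [← hP, hq]; simp
    exact fun k => sum_sq_eq_zero (fun k => phi N (q k)) h0 k
  refine ⟨m, Matrix.of (fun i k => phi N (pderiv (Sum.inr i) (q k))), ?_⟩
  refine Matrix.ext fun i j => ?_
  simp only [Matrix.of_apply, Matrix.mul_apply, Matrix.transpose_apply]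
  have key := congrArg (fun p => phi N (pderiv (Sum.inr i) (pderiv (Sum.inr j) p))) hq
  simp only [key_lhs] at key
  rw [map_sum, map_sum, map_sum] at key
  simp only [key_rhs i j _ (hq0 _)] at key
  rw [pderiv_comm' j i f] at key
  have key2 : (2 : MvPolynomial (Fin N) ℝ) * pderiv i (pderiv j f)
      = 2 * ∑ k, phi N (pderiv (Sum.inr i) (q k)) * phi N (pderiv (Sum.inr j) (q k)) := by
    rw [two_mul, key, Finset.mul_sum]
    exact Finset.sum_congr rfl fun k _ => by ring
  have h2 : (2 : MvPolynomial (Fin N) ℝ) ≠ 0 := by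
    intro h
    have h2 : (2:ℝ) = 0 := by
      have := congrArg (eval (fun _ => (0:ℝ))) h
      rwa [map_ofNat, map_zero] at this
    norm_num at h2
  exact mul_left_cancel₀ h2 key2

lemma forward_dir (N : ℕ) (f : MvPolynomial (Fin N) ℝ) (a : ℕ)
    (L : Matrix (Fin N) (Fin a) (MvPolynomial (Fin N) ℝ))
    (hL : Matrix.of (fun i j : Fin N => pderiv i (pderiv j f)) = L * L.transpose) :
    (∑ i : Fin N, ∑ j : Fin N,
        X (Sum.inr i) * rename Sum.inl (pderiv i (pderiv j f)) * X (Sum.inr j) :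
        MvPolynomial (Fin N ⊕ Fin N) ℝ)
      = ∑ k : Fin a, (∑ i : Fin N, X (Sum.inr i) * rename Sum.inl (L i k)) ^ 2 := by
  have hH : ∀ i j, pderiv i (pderiv j f) = ∑ k, L i k * L j k := by
    intro i j
    have := congrFun (congrFun hL i) j
    simpa [Matrix.mul_apply] using this
  have expand : ∀ k : Fin a, (∑ i : Fin N, X (Sum.inr i) * rename Sum.inl (L i k)) ^ 2
      = ∑ i : Fin N, ∑ j : Fin N,
          X (Sum.inr i) * rename Sum.inl (L i k * L j k) * X (Sum.inr j) := by
    intro k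
    rw [sq, Finset.sum_mul_sum]
    refine Finset.sum_congr rfl fun i _ => Finset.sum_congr rfl fun j _ => ?_
    rw [map_mul]; ring
  simp only [expand]
  calc (∑ i : Fin N, ∑ j : Fin N,
        X (Sum.inr i) * rename Sum.inl (pderiv i (pderiv j f)) * X (Sum.inr j) :
        MvPolynomial (Fin N ⊕ Fin N) ℝ)
      = ∑ i : Fin N, ∑ j : Fin N, ∑ k : Fin a,
          X (Sum.inr i) * rename Sum.inl (L i k * L j k) * X (Sum.inr j) := by
        simp only [hH, map_sum, Finset.mul_sum, Finset.sum_mul]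
    _ = ∑ i : Fin N, ∑ k : Fin a, ∑ j : Fin N,
          X (Sum.inr i) * rename Sum.inl (L i k * L j k) * X (Sum.inr j) :=
        Finset.sum_congr rfl fun i _ => Finset.sum_comm
    _ = ∑ k : Fin a, ∑ i : Fin N, ∑ j : Fin N,
          X (Sum.inr i) * rename Sum.inl (L i k * L j k) * X (Sum.inr j) :=
        Finset.sum_comm

/-- Lemma 2.2 of Ahmadi–Parrilo: `f` is SOS-convex (its Hessian factors as `L·Lᵀ` with
polynomial entries) iff `zᵀ ∇²f(x) z`, as a polynomial in the `2N` variables `(x, z)`,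
is a sum of squares. -/
theorem sos_convex_iff_zHz_sos (N : ℕ) (f : MvPolynomial (Fin N) ℝ) :
    (∃ (a : ℕ) (L : Matrix (Fin N) (Fin a) (MvPolynomial (Fin N) ℝ)),
        Matrix.of (fun i j : Fin N => pderiv i (pderiv j f)) = L * L.transpose) ↔
    IsSumOfSquares
      (∑ i : Fin N, ∑ j : Fin N,
        X (Sum.inr i) * rename Sum.inl (pderiv i (pderiv j f)) * X (Sum.inr j) :
        MvPolynomial (Fin N ⊕ Fin N) ℝ) := by
  constructor
  · rintro ⟨a, L, hL⟩
    exact ⟨a, fun k => ∑ i : Fin N, X (Sum.inr i) * rename Sum.inl (L i k),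
      forward_dir N f a L hL⟩
  · rintro ⟨m, q, hq⟩
    exact backward_dir N f m q hq
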